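/- Lemma 5.2 (bound of the primal gap by the multi-dual gap function): Let x̄ ∈ X and ȳ = (ȳ_1, …, ȳ_m) with J_i(ȳ_i) < +∞ for each i be given, and let z* = (x*, y*) where x* is an optimal solution of min_{x∈X} Ψ(x) and y*_i = ∇f_i(x*). Then Ψ(x̄) − Ψ(x*) ≤ Q((x̄, ȳ), z*) + (L_f/2)·‖x̄ − x*‖². -/

import Mathlib

open scoped RealInnerProductSpace


lemma hasDerivAt_comp_line {n : ℕ} (f : EuclideanSpace ℝ (Fin n) → ℝ)
    (g x d : EuclideanSpace ℝ (Fin n)) (t : ℝ)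
    (hf : HasGradientAt f g (x + t • d)) :
    HasDerivAt (fun s : ℝ => f (x + s • d)) ⟪g, d⟫ t := by
  have hc : HasDerivAt (fun s : ℝ => x + s • d) d t := by
    simpa using ((hasDerivAt_id t).smul_const d).const_add x
  have h := (hasGradientAt_iff_hasFDerivAt.mp hf).comp_hasDerivAt t hc
  simp at h
  exact h

lemma grad_ineq {n : ℕ} {f : EuclideanSpace ℝ (Fin n) → ℝ}
    {g x : EuclideanSpace ℝ (Fin n)} (hc : ConvexOn ℝ Set.univ f)
    (hg : HasGradientAt f g x) (u : EuclideanSpace ℝ (Fin n)) :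
    f x + ⟪g, u - x⟫ ≤ f u := by
  have hφ : ConvexOn ℝ Set.univ (fun t : ℝ => f (x + t • (u - x))) := by
    have h2 := hc.comp_affineMap (AffineMap.lineMap x u : ℝ →ᵃ[ℝ] EuclideanSpace ℝ (Fin n))
    have heq : (fun t : ℝ => f (x + t • (u - x))) = f ∘ (AffineMap.lineMap x u) := by
      funext t
      simp [AffineMap.lineMap_apply, add_comm]
    rw [heq]
    simpa using h2
  have hd : HasDerivAt (fun t : ℝ => f (x + t • (u - x))) ⟪g, u - x⟫ 0 := by
    apply hasDerivAt_comp_line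
    simpa using hg
  have hs := hφ.le_slope_of_hasDerivAt (Set.mem_univ (0:ℝ)) (Set.mem_univ (1:ℝ)) one_pos hd
  have h1 : x + (1:ℝ) • (u - x) = u := by simp
  have h0 : x + (0:ℝ) • (u - x) = x := by simp
  rw [slope_def_field, h1, h0, sub_zero, div_one] at hs
  linarith

lemma descent_lemma {n : ℕ} (F : EuclideanSpace ℝ (Fin n) → ℝ)
    (G : EuclideanSpace ℝ (Fin n) → EuclideanSpace ℝ (Fin n))
    (hg : ∀ p, HasGradientAt F (G p) p) (L : ℝ)
    (hLip : ∀ u v, ‖G u - G v‖ ≤ L * ‖u - v‖)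
    (x y : EuclideanSpace ℝ (Fin n)) :
    F y ≤ F x + ⟪G x, y - x⟫ + L / 2 * ‖y - x‖ ^ 2 := by
  set d := y - x with hd
  set φ : ℝ → ℝ := fun t => F (x + t • d) - t * ⟪G x, d⟫ - L / 2 * t ^ 2 * ‖d‖ ^ 2 with hφ
  have hder : ∀ t : ℝ, HasDerivAt φ (⟪G (x + t • d), d⟫ - ⟪G x, d⟫ - L * t * ‖d‖ ^ 2) t := by
    intro t
    have h1 := hasDerivAt_comp_line F (G (x + t • d)) x d t (hg _)
    have h2 : HasDerivAt (fun s : ℝ => s * ⟪G x, d⟫) ⟪G x, d⟫ t := by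
      simpa using (hasDerivAt_id t).mul_const (⟪G x, d⟫)
    have h3 : HasDerivAt (fun s : ℝ => L / 2 * s ^ 2 * ‖d‖ ^ 2) (L * t * ‖d‖ ^ 2) t := by
      have h4 := ((hasDerivAt_pow 2 t).const_mul (L / 2)).mul_const (‖d‖ ^ 2)
      exact h4.congr_deriv (by rw [show (2:ℕ) - 1 = 1 from rfl]; push_cast; ring)
    exact (h1.sub h2).sub h3
  have hdiff : Differentiable ℝ φ := fun t => (hder t).differentiableAt
  have hanti : AntitoneOn φ (Set.Icc 0 1) := by
    apply antitoneOn_of_deriv_nonpos (convex_Icc 0 1) hdiff.continuous.continuousOn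
      (hdiff.differentiableOn)
    intro t ht
    rw [interior_Icc] at ht
    rw [(hder t).deriv]
    have h1 : ⟪G (x + t • d) - G x, d⟫ ≤ ‖G (x + t • d) - G x‖ * ‖d‖ := real_inner_le_norm _ _
    have h2 : ‖G (x + t • d) - G x‖ ≤ L * (t * ‖d‖) := by
      have h5 := hLip (x + t • d) x
      simpa [norm_smul, abs_of_nonneg ht.1.le, mul_assoc] using h5
    have h3 : ⟪G (x + t • d), d⟫ - ⟪G x, d⟫ = ⟪G (x + t • d) - G x, d⟫ := by
      rw [inner_sub_left]
    nlinarith [norm_nonneg d, norm_nonneg (G (x + t • d) - G x), ht.1.le]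
  have h01 : φ 1 ≤ φ 0 := hanti (Set.left_mem_Icc.2 one_pos.le) (Set.right_mem_Icc.2 one_pos.le)
    one_pos.le
  have he1 : x + (1:ℝ) • d = y := by simp [hd]
  have he0 : x + (0:ℝ) • d = x := by simp
  simp only [hφ, he1, he0, one_pow, mul_one, one_mul, zero_mul, mul_zero, sub_zero,
    pow_two, zero_pow] at h01
  nlinarith [h01]

lemma sum_grad {n m : ℕ} (f : Fin m → EuclideanSpace ℝ (Fin n) → ℝ)
    (f' : Fin m → EuclideanSpace ℝ (Fin n) → EuclideanSpace ℝ (Fin n))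
    (hd : ∀ i u, HasGradientAt (f i) (f' i u) u) (p : EuclideanSpace ℝ (Fin n)) :
    HasGradientAt (fun u => ∑ i, f i u) (∑ i, f' i p) p := by
  rw [hasGradientAt_iff_hasFDerivAt]
  have h : ∀ i ∈ Finset.univ, HasFDerivAt (f i)
      (InnerProductSpace.toDual ℝ (EuclideanSpace ℝ (Fin n)) (f' i p)) p :=
    fun i _ => hasGradientAt_iff_hasFDerivAt.mp (hd i p)
  have hs := HasFDerivAt.sum h
  rw [map_sum]
  rw [show (fun u => ∑ i, f i u) = ∑ i, f i from by ext u; simp]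
  exact hs

/-- Lemma 5.2 (bound of the primal gap by the multi-dual gap function):
for any `x̄ ∈ X` and any `ȳ` in the domain of the conjugates `J_i`,
`Ψ(x̄) - Ψ(x*) ≤ Q((x̄, ȳ), z*) + (L_f/2)‖x̄ - x*‖²`, where
`z* = (x*, y*)` with `y*_i = ∇f_i(x*)`. -/
theorem primal_gap_le_Q
    {n m : ℕ} (X : Set (EuclideanSpace ℝ (Fin n)))
    (hXne : X.Nonempty) (hXclosed : IsClosed X) (hXconvex : Convex ℝ X)
    (f : Fin m → EuclideanSpace ℝ (Fin n) → ℝ)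
    (f' : Fin m → EuclideanSpace ℝ (Fin n) → EuclideanSpace ℝ (Fin n))
    (L : Fin m → ℝ) (Lf μ : ℝ) (hμ : 0 ≤ μ)
    (hfconv : ∀ i, ConvexOn ℝ Set.univ (f i))
    (hfdiff : ∀ i u, HasGradientAt (f i) (f' i u) u)
    (hfiLip : ∀ i u v, ‖f' i u - f' i v‖ ≤ L i * ‖u - v‖)
    (hfLip : ∀ u v, ‖(∑ i, f' i u) - ∑ i, f' i v‖ ≤ Lf * ‖u - v‖)
    (h w : EuclideanSpace ℝ (Fin n) → ℝ)
    (hhconv : ConvexOn ℝ X h) (hwconv : ConvexOn ℝ X w)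
    (J : Fin m → EuclideanSpace ℝ (Fin n) → ℝ)
    (hJ : ∀ i y, J i y = ⨆ u, (⟪u, y⟫ - f i u))
    (Q : (EuclideanSpace ℝ (Fin n) × (Fin m → EuclideanSpace ℝ (Fin n))) →
         (EuclideanSpace ℝ (Fin n) × (Fin m → EuclideanSpace ℝ (Fin n))) → ℝ)
    (hQ : ∀ zb z, Q zb z =
      (h zb.1 + μ * w zb.1 + ⟪zb.1, ∑ i, z.2 i⟫ - ∑ i, J i (z.2 i))
      - (h z.1 + μ * w z.1 + ⟪z.1, ∑ i, zb.2 i⟫ - ∑ i, J i (zb.2 i)))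
    (xb : EuclideanSpace ℝ (Fin n)) (hxb : xb ∈ X)
    (yb : Fin m → EuclideanSpace ℝ (Fin n))
    (hyb : ∀ i, BddAbove (Set.range fun u => ⟪u, yb i⟫ - f i u))
    (xstar : EuclideanSpace ℝ (Fin n)) (hxstarX : xstar ∈ X)
    (hopt : ∀ u ∈ X, (∑ i, f i xstar) + h xstar + μ * w xstar ≤
        (∑ i, f i u) + h u + μ * w u) :
    ((∑ i, f i xb) + h xb + μ * w xb) - ((∑ i, f i xstar) + h xstar + μ * w xstar)
      ≤ Q (xb, yb) (xstar, fun i => f' i xstar) + Lf / 2 * ‖xb - xstar‖ ^ 2 := by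
  have hdesc := descent_lemma (fun u => ∑ i, f i u) (fun p => ∑ i, f' i p)
    (sum_grad f f' hfdiff) Lf hfLip xstar xb
  -- hdesc : ∑ f i xb ≤ ∑ f i xstar + ⟪∑ f' i xstar, xb - xstar⟫ + Lf/2 ‖xb - xstar‖²
  have hJstar : ∀ i, J i (f' i xstar) = ⟪xstar, f' i xstar⟫ - f i xstar := by
    intro i
    rw [hJ]
    have hub : ∀ u, ⟪u, f' i xstar⟫ - f i u ≤ ⟪xstar, f' i xstar⟫ - f i xstar := by
      intro u
      have hgi := grad_ineq (hfconv i) (hfdiff i xstar) u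
      have hsplit : ⟪f' i xstar, u - xstar⟫ = ⟪u, f' i xstar⟫ - ⟪xstar, f' i xstar⟫ := by
        rw [inner_sub_right, real_inner_comm (f' i xstar) u, real_inner_comm (f' i xstar) xstar]
      linarith
    apply le_antisymm
    · exact ciSup_le hub
    · exact le_ciSup ⟨_, by rintro z ⟨u, rfl⟩; exact hub u⟩ xstar
  have hJyb : ∀ i, ⟪xstar, yb i⟫ - f i xstar ≤ J i (yb i) := by
    intro i
    rw [hJ]
    exact le_ciSup (hyb i) xstar
  rw [hQ]
  dsimp only
  have e1 : ∑ i, J i (f' i xstar) = ⟪xstar, ∑ i, f' i xstar⟫ - ∑ i, f i xstar := by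
    rw [inner_sum, ← Finset.sum_sub_distrib]
    exact Finset.sum_congr rfl fun i _ => hJstar i
  have e2 : ⟪xstar, ∑ i, yb i⟫ - ∑ i, f i xstar ≤ ∑ i, J i (yb i) := by
    rw [inner_sum, ← Finset.sum_sub_distrib]
    exact Finset.sum_le_sum fun i _ => hJyb i
  have e3 : ⟪∑ i, f' i xstar, xb - xstar⟫
      = ⟪xb, ∑ i, f' i xstar⟫ - ⟪xstar, ∑ i, f' i xstar⟫ := by
    rw [inner_sub_right, real_inner_comm _ xb, real_inner_comm _ xstar]
  linarith
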